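/- Let X be a Banach space and let (A_m)_{m∈ℤ} be a sequence of bounded linear operators on X admitting an exponential dichotomy with constants C, λ > 0. Then for every bounded sequence y = (y_n)_{n∈ℤ} ⊂ X there exists a unique bounded sequence x = (x_n)_{n∈ℤ} ⊂ X such that x_{n+1} − A_n x_n = y_{n+1} for all n ∈ ℤ; moreover this x satisfies sup_n ‖x_n‖ ≤ C(1+e^{−λ})/(1−e^{−λ}) · sup_n ‖y_n‖. -/

import Mathlib

/-- The forward products `𝒜(m,n) = A_{m-1} ⋯ A_n` (equal to the identity when `m ≤ n`). -/
noncomputable def calA {X : Type*} [NormedAddCommGroup X] [NormedSpace ℝ X]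
    (A : ℤ → X →L[ℝ] X) (m n : ℤ) : X →L[ℝ] X :=
  (List.range (m - n).toNat).foldl (fun B k => (A (n + (k : ℤ))).comp B)
    (ContinuousLinearMap.id ℝ X)

/-- The sequence `(A_m)_{m ∈ ℤ}` admits an exponential dichotomy with constants `C, lam > 0`.
For `m ≤ n`, the operator `𝒜(m,n)` (the inverse of `𝒜(n,m)` restricted to `Ker P_m`)
is described implicitly: `w = 𝒜(m,n)(Id - P_n) x` iff `w ∈ Ker P_m` and
`𝒜(n,m) w = x - P_n x`. -/
def ExpDichotomy {X : Type*} [NormedAddCommGroup X] [NormedSpace ℝ X]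
    (A : ℤ → X →L[ℝ] X) (C lam : ℝ) : Prop :=
  ∃ P : ℤ → X →L[ℝ] X,
    (∀ m, (P m).comp (P m) = P m) ∧
    (∀ m, (P (m + 1)).comp (A m) = (A m).comp (P m)) ∧
    (∀ m, Set.BijOn (A m) (LinearMap.ker (P m : X →ₗ[ℝ] X) : Set X)
      (LinearMap.ker (P (m + 1) : X →ₗ[ℝ] X) : Set X)) ∧
    (∀ m n : ℤ, n ≤ m → ‖(calA A m n).comp (P n)‖ ≤ C * Real.exp (-lam * (m - n))) ∧
    (∀ m n : ℤ, m ≤ n → ∀ x w : X, w ∈ LinearMap.ker (P m : X →ₗ[ℝ] X) →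
      calA A n m w = x - P n x → ‖w‖ ≤ C * Real.exp (-lam * (n - m)) * ‖x‖)

lemma calA_self {X : Type*} [NormedAddCommGroup X] [NormedSpace ℝ X]
    (A : ℤ → X →L[ℝ] X) (n : ℤ) : calA A n n = ContinuousLinearMap.id ℝ X := by
  simp [calA]

lemma calA_succ {X : Type*} [NormedAddCommGroup X] [NormedSpace ℝ X]
    (A : ℤ → X →L[ℝ] X) {m n : ℤ} (h : n ≤ m) :
    calA A (m + 1) n = (A m).comp (calA A m n) := by
  unfold calA
  have h1 : (m + 1 - n).toNat = (m - n).toNat + 1 := by omega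
  have h2 : n + ((m - n).toNat : ℤ) = m := by omega
  have h3 : (m - n) ⊔ 0 = m - n := sup_eq_left.mpr (by omega)
  simp [h1, List.range_succ, h2, h3]

lemma calA_comp {X : Type*} [NormedAddCommGroup X] [NormedSpace ℝ X]
    (A : ℤ → X →L[ℝ] X) {m k n : ℤ} (hnk : n ≤ k) (hkm : k ≤ m) :
    (calA A m k).comp (calA A k n) = calA A m n := by
  refine Int.le_induction (motive := fun j _ => (calA A j k).comp (calA A k n) = calA A j n) ?_ ?_ m hkm
  · show (calA A k k).comp (calA A k n) = calA A k n
    rw [calA_self]; exact (calA A k n).id_comp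
  · intro m hm ih
    show (calA A (m+1) k).comp (calA A k n) = calA A (m+1) n
    rw [calA_succ A hm, calA_succ A (hnk.trans hm), ContinuousLinearMap.comp_assoc, ih]


open Filter Topology

/-- If `(A_m)_{m∈ℤ}` admits an exponential dichotomy with constants `C, lam > 0`, then for every
bounded sequence `y` there is a unique bounded sequence `x` with `x_{n+1} - A_n x_n = y_{n+1}`
for all `n`, and moreover `sup_n ‖x_n‖ ≤ C (1+e^{-lam})/(1-e^{-lam}) · sup_n ‖y_n‖`. -/
theorem dichotomy_admissibility_unique
    {X : Type*} [NormedAddCommGroup X] [NormedSpace ℝ X] [CompleteSpace X]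
    (A : ℤ → X →L[ℝ] X) (C lam : ℝ) (hC : 0 < C) (hlam : 0 < lam)
    (h : ExpDichotomy A C lam)
    (y : ℤ → X) (hy : BddAbove (Set.range fun n => ‖y n‖)) :
    (∃! x : ℤ → X, BddAbove (Set.range fun n => ‖x n‖) ∧
        ∀ n : ℤ, x (n + 1) - A n (x n) = y (n + 1)) ∧
    (∀ x : ℤ → X, (BddAbove (Set.range fun n => ‖x n‖) ∧
        ∀ n : ℤ, x (n + 1) - A n (x n) = y (n + 1)) →
      ∀ n : ℤ, ‖x n‖ ≤ C * (1 + Real.exp (-lam)) / (1 - Real.exp (-lam)) * ⨆ m : ℤ, ‖y m‖) := by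
  obtain ⟨P, hP1, hP2, hP3, hP4, hP5⟩ := h
  have hPP : ∀ (n : ℤ) (x : X), P n (P n x) = P n x := fun n x => by
    have := DFunLike.congr_fun (hP1 n) x
    simpa using this
  have hcomm : ∀ m n : ℤ, n ≤ m → (P m).comp (calA A m n) = (calA A m n).comp (P n) := by
    intro m n hnm
    refine Int.le_induction
      (motive := fun j _ => (P j).comp (calA A j n) = (calA A j n).comp (P n)) ?_ ?_ m hnm
    · simp [calA_self]
    · intro j hj ih
      show (P (j+1)).comp (calA A (j+1) n) = (calA A (j+1) n).comp (P n)
      rw [calA_succ A hj, ← ContinuousLinearMap.comp_assoc, hP2 j,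
        ContinuousLinearMap.comp_assoc, ih, ← ContinuousLinearMap.comp_assoc]
  have hcomm' : ∀ m n : ℤ, n ≤ m → ∀ x : X, P m (calA A m n x) = calA A m n (P n x) := by
    intro m n hnm x
    have := DFunLike.congr_fun (hcomm m n hnm) x
    simpa using this
  have hbij : ∀ m n : ℤ, n ≤ m →
      Set.BijOn (calA A m n) (LinearMap.ker (P n : X →ₗ[ℝ] X) : Set X) (LinearMap.ker (P m : X →ₗ[ℝ] X) : Set X) := by
    intro m n hnm
    refine Int.le_induction (motive := fun j _ => Set.BijOn (calA A j n)
      (LinearMap.ker (P n : X →ₗ[ℝ] X) : Set X) (LinearMap.ker (P j : X →ₗ[ℝ] X) : Set X)) ?_ ?_ m hnm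
    · show Set.BijOn (calA A n n) _ _
      rw [calA_self]
      exact Set.bijOn_id _
    · intro j hj ih
      show Set.BijOn (calA A (j+1) n) _ _
      have hcoe : (calA A (j+1) n : X → X) = (A j : X → X) ∘ (calA A j n : X → X) := by
        rw [calA_succ A hj]; rfl
      rw [hcoe]
      exact (hP3 j).comp ih
  -- inverse operators on unstable fibers
  have hgex : ∀ m n : ℤ, ∀ x : X, ∃ w : X, m ≤ n →
      w ∈ LinearMap.ker (P m : X →ₗ[ℝ] X) ∧ calA A n m w = x - P n x := by
    intro m n x
    by_cases hmn : m ≤ n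
    · have hx : x - P n x ∈ LinearMap.ker (P n : X →ₗ[ℝ] X) := by
        simp [LinearMap.mem_ker, map_sub, hPP n x]
      obtain ⟨w, hw, hweq⟩ := (hbij n m hmn).surjOn hx
      exact ⟨w, fun _ => ⟨hw, hweq⟩⟩
    · exact ⟨0, fun hc => absurd hc hmn⟩
  choose g hg using hgex
  have hgker : ∀ m n : ℤ, m ≤ n → ∀ x : X, g m n x ∈ LinearMap.ker (P m : X →ₗ[ℝ] X) :=
    fun m n hmn x => (hg m n x hmn).1
  have hgeq : ∀ m n : ℤ, m ≤ n → ∀ x : X, calA A n m (g m n x) = x - P n x :=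
    fun m n hmn x => (hg m n x hmn).2
  have hgnorm : ∀ m n : ℤ, m ≤ n → ∀ x : X,
      ‖g m n x‖ ≤ C * Real.exp (-lam * ((n : ℝ) - (m : ℝ))) * ‖x‖ :=
    fun m n hmn x => hP5 m n hmn x _ (hgker m n hmn x) (hgeq m n hmn x)
  have hA1 : ∀ m : ℤ, calA A (m+1) m = A m := by
    intro m; rw [calA_succ A le_rfl, calA_self]; exact (A m).comp_id
  have hAg : ∀ m n : ℤ, m + 1 ≤ n → ∀ x : X, A m (g m n x) = g (m+1) n x := by
    intro m n hmn x
    have hmn' : m ≤ n := by omega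
    refine (hbij n (m+1) hmn).injOn ((hP3 m).mapsTo (hgker m n hmn' x)) (hgker (m+1) n hmn x) ?_
    have hc := calA_comp A (by omega : m ≤ m + 1) hmn
    rw [hA1 m] at hc
    have h1 := DFunLike.congr_fun hc (g m n x)
    simp only [ContinuousLinearMap.comp_apply] at h1
    rw [h1, hgeq m n hmn' x, hgeq (m+1) n hmn x]
  have hAgbase : ∀ n : ℤ, ∀ x : X, A n (g n (n+1) x) = x - P (n+1) x := by
    intro n x
    have := hgeq n (n+1) (by omega) x
    rwa [hA1 n] at this
  -- geometric setup
  set q := Real.exp (-lam) with hqdef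
  have hq0 : 0 < q := Real.exp_pos _
  have hq1 : q < 1 := by
    rw [hqdef, Real.exp_lt_one_iff]; linarith
  have h1q : 0 < 1 - q := by linarith
  have hgeo : Summable (fun k : ℕ => q ^ k) := summable_geometric_of_lt_one hq0.le hq1
  set Y := ⨆ m : ℤ, ‖y m‖ with hYdef
  have hYle : ∀ j : ℤ, ‖y j‖ ≤ Y := fun j => le_ciSup hy j
  have hY0 : 0 ≤ Y := le_trans (norm_nonneg _) (hYle 0)
  have hqpow : ∀ k : ℕ, Real.exp (-lam * (k : ℝ)) = q ^ k := by
    intro k; rw [mul_comm, Real.exp_nat_mul]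
  -- the candidate solution
  have hfSnorm : ∀ (n : ℤ) (k : ℕ),
      ‖((calA A n (n - k)).comp (P (n - k))) (y (n - k))‖ ≤ C * Y * q ^ k := by
    intro n k
    calc ‖((calA A n (n - k)).comp (P (n - k))) (y (n - k))‖
        ≤ ‖(calA A n (n - k)).comp (P (n - k))‖ * ‖y (n - k)‖ :=
          ContinuousLinearMap.le_opNorm _ _
      _ ≤ (C * Real.exp (-lam * ((n : ℝ) - ((n - k : ℤ) : ℝ)))) * Y := by
          apply mul_le_mul (hP4 n (n - k) (by omega)) (hYle _) (norm_nonneg _)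
          positivity
      _ = C * Y * q ^ k := by
          have : ((n : ℝ) - ((n - k : ℤ) : ℝ)) = (k : ℝ) := by push_cast; ring
          rw [this, hqpow]; ring
  have hfUnorm : ∀ (n : ℤ) (k : ℕ),
      ‖g n (n + 1 + k) (y (n + 1 + k))‖ ≤ (C * Y * q) * q ^ k := by
    intro n k
    calc ‖g n (n + 1 + k) (y (n + 1 + k))‖
        ≤ C * Real.exp (-lam * (((n + 1 + k : ℤ) : ℝ) - (n : ℝ))) * ‖y (n + 1 + k)‖ :=
          hgnorm n (n + 1 + k) (by omega) _
      _ ≤ C * Real.exp (-lam * (((n + 1 + k : ℤ) : ℝ) - (n : ℝ))) * Y := by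
          apply mul_le_mul_of_nonneg_left (hYle _)
          positivity
      _ = (C * Y * q) * q ^ k := by
          have h1 : (((n + 1 + k : ℤ) : ℝ) - (n : ℝ)) = ((k + 1 : ℕ) : ℝ) := by push_cast; ring
          rw [h1, hqpow, pow_succ]; ring
  have hSsum : ∀ n : ℤ, Summable (fun k : ℕ =>
      ((calA A n (n - k)).comp (P (n - k))) (y (n - k))) := fun n =>
    Summable.of_norm_bounded (hgeo.mul_left (C * Y)) (hfSnorm n)
  have hUsum : ∀ n : ℤ, Summable (fun k : ℕ => g n (n + 1 + k) (y (n + 1 + k))) := fun n =>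
    Summable.of_norm_bounded (hgeo.mul_left (C * Y * q)) (hfUnorm n)
  set S : ℤ → X := fun n => ∑' k : ℕ, ((calA A n (n - k)).comp (P (n - k))) (y (n - k))
    with hSdef
  set U : ℤ → X := fun n => ∑' k : ℕ, g n (n + 1 + k) (y (n + 1 + k)) with hUdef
  set xs : ℤ → X := fun n => S n - U n with hxsdef
  -- norm bounds
  have hSnorm : ∀ n : ℤ, ‖S n‖ ≤ C * Y * (1 - q)⁻¹ := by
    intro n
    have hns : Summable (fun k : ℕ => ‖((calA A n (n - k)).comp (P (n - k))) (y (n - k))‖) :=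
      Summable.of_nonneg_of_le (fun k => norm_nonneg _) (hfSnorm n) (hgeo.mul_left (C * Y))
    calc ‖S n‖ ≤ ∑' k : ℕ, ‖((calA A n (n - k)).comp (P (n - k))) (y (n - k))‖ :=
          norm_tsum_le_tsum_norm hns
      _ ≤ ∑' k : ℕ, (C * Y) * q ^ k := Summable.tsum_le_tsum (hfSnorm n) hns (hgeo.mul_left (C * Y))
      _ = C * Y * (1 - q)⁻¹ := by
          rw [tsum_mul_left, tsum_geometric_of_lt_one hq0.le hq1]
  have hUnorm : ∀ n : ℤ, ‖U n‖ ≤ (C * Y * q) * (1 - q)⁻¹ := by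
    intro n
    have hns : Summable (fun k : ℕ => ‖g n (n + 1 + k) (y (n + 1 + k))‖) :=
      Summable.of_nonneg_of_le (fun k => norm_nonneg _) (hfUnorm n) (hgeo.mul_left (C * Y * q))
    calc ‖U n‖ ≤ ∑' k : ℕ, ‖g n (n + 1 + k) (y (n + 1 + k))‖ := norm_tsum_le_tsum_norm hns
      _ ≤ ∑' k : ℕ, (C * Y * q) * q ^ k :=
          Summable.tsum_le_tsum (hfUnorm n) hns (hgeo.mul_left (C * Y * q))
      _ = (C * Y * q) * (1 - q)⁻¹ := by
          rw [tsum_mul_left, tsum_geometric_of_lt_one hq0.le hq1]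
  have hxsB : ∀ n : ℤ, ‖xs n‖ ≤ C * (1 + q) / (1 - q) * Y := by
    intro n
    have : ‖xs n‖ ≤ ‖S n‖ + ‖U n‖ := norm_sub_le _ _
    have hB : C * Y * (1 - q)⁻¹ + (C * Y * q) * (1 - q)⁻¹ = C * (1 + q) / (1 - q) * Y := by
      field_simp
    linarith [hSnorm n, hUnorm n]
  -- the recurrence
  have hrec : ∀ n : ℤ, xs (n + 1) - A n (xs n) = y (n + 1) := by
    intro n
    have hAS : A n (S n) = ∑' k : ℕ,
        ((calA A (n + 1) (n - k)).comp (P (n - k))) (y (n - k)) := by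
      rw [hSdef]
      rw [ContinuousLinearMap.map_tsum (A n) (hSsum n)]
      refine tsum_congr fun k => ?_
      have := calA_succ A (by omega : n - (k : ℤ) ≤ n)
      rw [this]
      simp [ContinuousLinearMap.comp_apply]
    have hS1 : S (n + 1) = P (n + 1) (y (n + 1)) + A n (S n) := by
      rw [hAS]
      have h0 : S (n + 1) = ∑' k : ℕ,
          ((calA A (n + 1) (n + 1 - k)).comp (P (n + 1 - k))) (y (n + 1 - k)) := rfl
      rw [h0, Summable.tsum_eq_zero_add (hSsum (n + 1))]
      congr 1
      · norm_num [calA_self]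
      · refine tsum_congr fun k => ?_
        have e1 : (n + 1 - ((k : ℕ) + 1 : ℕ) : ℤ) = n - k := by push_cast; ring
        rw [show (((k + 1 : ℕ) : ℤ)) = (k : ℤ) + 1 by push_cast; ring]
        have e2 : (n + 1 - ((k : ℤ) + 1) : ℤ) = n - k := by ring
        rw [e2]
    have hAU : A n (U n) = (y (n + 1) - P (n + 1) (y (n + 1))) + U (n + 1) := by
      rw [hUdef]
      rw [ContinuousLinearMap.map_tsum (A n) (hUsum n)]
      have hmsum : Summable (fun k : ℕ => A n (g n (n + 1 + k) (y (n + 1 + k)))) := by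
        apply Summable.of_norm_bounded ((hgeo.mul_left ((C * Y * q) * ‖A n‖)))
        intro k
        calc ‖A n (g n (n + 1 + k) (y (n + 1 + k)))‖
            ≤ ‖A n‖ * ‖g n (n + 1 + k) (y (n + 1 + k))‖ := ContinuousLinearMap.le_opNorm _ _
          _ ≤ ‖A n‖ * ((C * Y * q) * q ^ k) :=
              mul_le_mul_of_nonneg_left (hfUnorm n k) (norm_nonneg _)
          _ = ((C * Y * q) * ‖A n‖) * q ^ k := by ring
      rw [Summable.tsum_eq_zero_add hmsum]
      congr 1
      · norm_num
        exact hAgbase n (y (n + 1))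
      · refine tsum_congr fun k => ?_
        have e1 : (n + 1 + ((k + 1 : ℕ) : ℤ) : ℤ) = (n + 1) + 1 + k := by push_cast; ring
        rw [show (((k + 1 : ℕ) : ℤ)) = (k : ℤ) + 1 by push_cast; ring]
        have e2 : (n + 1 + ((k : ℤ) + 1) : ℤ) = (n + 1) + 1 + k := by ring
        rw [e2, hAg n ((n + 1) + 1 + k) (by omega)]
    have hx1 : xs (n + 1) = S (n + 1) - U (n + 1) := rfl
    have hx2 : A n (xs n) = A n (S n) - A n (U n) := by
      rw [hxsdef]; simp [map_sub]
    rw [hx1, hx2, hS1, hAU]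
    abel
  have hxsbdd : BddAbove (Set.range fun n => ‖xs n‖) := by
    refine ⟨C * (1 + q) / (1 - q) * Y, ?_⟩
    rintro r ⟨n, rfl⟩
    exact hxsB n
  -- uniqueness of bounded solutions
  have hzero : ∀ d : ℤ → X, BddAbove (Set.range fun n => ‖d n‖) →
      (∀ n : ℤ, d (n + 1) = A n (d n)) → ∀ n : ℤ, d n = 0 := by
    intro d hbdd hstep
    obtain ⟨M, hM⟩ := hbdd
    have hMle : ∀ n : ℤ, ‖d n‖ ≤ M := fun n => hM ⟨n, rfl⟩
    have hM0 : 0 ≤ M := le_trans (norm_nonneg _) (hMle 0)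
    have hiter : ∀ m n : ℤ, m ≤ n → d n = calA A n m (d m) := by
      intro m n hmn
      refine Int.le_induction (motive := fun j _ => d j = calA A j m (d m)) ?_ ?_ n hmn
      · show d m = calA A m m (d m); rw [calA_self]; rfl
      · intro j hj ih
        show d (j + 1) = calA A (j + 1) m (d m)
        rw [hstep j, ih, calA_succ A hj]; rfl
    have htend : Tendsto (fun j : ℕ => C * M * q ^ j) atTop (𝓝 0) := by
      have h0 := tendsto_pow_atTop_nhds_zero_of_lt_one hq0.le hq1
      simpa using h0.const_mul (C * M)
    intro n
    have hP0 : P n (d n) = 0 := by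
      have key : ∀ j : ℕ, ‖P n (d n)‖ ≤ C * M * q ^ j := by
        intro j
        have h1 : P n (d n) = ((calA A n (n - j)).comp (P (n - j))) (d (n - j)) := by
          conv_lhs => rw [hiter (n - j) n (by omega)]
          rw [hcomm' n (n - j) (by omega)]
          rfl
        calc ‖P n (d n)‖ = ‖((calA A n (n - j)).comp (P (n - j))) (d (n - j))‖ := by rw [h1]
          _ ≤ ‖(calA A n (n - j)).comp (P (n - j))‖ * ‖d (n - j)‖ :=
              ContinuousLinearMap.le_opNorm _ _
          _ ≤ (C * Real.exp (-lam * ((n : ℝ) - ((n - j : ℤ) : ℝ)))) * M :=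
              mul_le_mul (hP4 n (n - j) (by omega)) (hMle _) (norm_nonneg _) (by positivity)
          _ = C * M * q ^ j := by
              have : ((n : ℝ) - ((n - j : ℤ) : ℝ)) = (j : ℝ) := by push_cast; ring
              rw [this, hqpow]; ring
      have h0 : ‖P n (d n)‖ ≤ 0 := ge_of_tendsto' htend key
      simpa using norm_le_zero_iff.mp h0
    have hQ0 : d n - P n (d n) = 0 := by
      have hker : d n - P n (d n) ∈ LinearMap.ker (P n : X →ₗ[ℝ] X) := by
        simp [LinearMap.mem_ker, map_sub, hPP]
      have key : ∀ j : ℕ, ‖d n - P n (d n)‖ ≤ C * M * q ^ j := by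
        intro j
        have heq : calA A (n + j) n (d n - P n (d n)) =
            d (n + j) - P (n + j) (d (n + j)) := by
          rw [map_sub, ← hiter n (n + j) (by omega), ← hcomm' (n + j) n (by omega),
            ← hiter n (n + j) (by omega)]
        calc ‖d n - P n (d n)‖
            ≤ C * Real.exp (-lam * (((n + j : ℤ) : ℝ) - (n : ℝ))) * ‖d (n + j)‖ :=
              hP5 n (n + j) (by omega) (d (n + j)) _ hker heq
          _ ≤ C * Real.exp (-lam * (((n + j : ℤ) : ℝ) - (n : ℝ))) * M :=
              mul_le_mul_of_nonneg_left (hMle _) (by positivity)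
          _ = C * M * q ^ j := by
              have : (((n + j : ℤ) : ℝ) - (n : ℝ)) = (j : ℝ) := by push_cast; ring
              rw [this, hqpow]; ring
      have h0 : ‖d n - P n (d n)‖ ≤ 0 := ge_of_tendsto' htend key
      simpa using norm_le_zero_iff.mp h0
    have : d n = (d n - P n (d n)) + P n (d n) := by abel
    rw [this, hQ0, hP0, add_zero]
  have huniq : ∀ x : ℤ → X, (BddAbove (Set.range fun n => ‖x n‖) ∧
      ∀ n : ℤ, x (n + 1) - A n (x n) = y (n + 1)) → x = xs := by
    rintro x ⟨hxb, hxr⟩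
    obtain ⟨M1, hM1⟩ := hxb
    have hM1le : ∀ n : ℤ, ‖x n‖ ≤ M1 := fun n => hM1 ⟨n, rfl⟩
    have hdb : BddAbove (Set.range fun n => ‖x n - xs n‖) := by
      refine ⟨M1 + C * (1 + q) / (1 - q) * Y, ?_⟩
      rintro r ⟨n, rfl⟩
      calc ‖x n - xs n‖ ≤ ‖x n‖ + ‖xs n‖ := norm_sub_le _ _
        _ ≤ M1 + C * (1 + q) / (1 - q) * Y := add_le_add (hM1le n) (hxsB n)
    have hds : ∀ n : ℤ, (x (n + 1) - xs (n + 1)) = A n (x n - xs n) := by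
      intro n
      have e1 := hxr n
      have e2 := hrec n
      rw [map_sub]
      have : x (n + 1) - xs (n + 1) = (x (n + 1) - A n (x n)) - (xs (n + 1) - A n (xs n))
          + (A n (x n) - A n (xs n)) := by abel
      rw [this, e1, e2]
      abel
    funext n
    have := hzero (fun n => x n - xs n) hdb hds n
    exact sub_eq_zero.mp this
  constructor
  · exact ⟨xs, ⟨hxsbdd, hrec⟩, fun x hx => huniq x hx⟩
  · intro x hx n
    rw [congrFun (huniq x hx) n]
    exact hxsB n
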